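/- Let θ, φ : [0,1] → ℝ be continuously differentiable with φ(0) = 0. Then for every (u,v) ∈ [0,1]², the iterated integral ∫₀ᵘ ∫₀ᵛ [1 + (θ·φ)'(max(s,t))·φ'(min(s,t))] dt ds equals C_{θ,φ}(u,v) + ∫₀^{min(u,v)} θ'(t)·φ(t)² dt, where C_{θ,φ}(u,v) = u·v + θ(max(u,v))·φ(u)·φ(v). (Consequently the absolutely continuous component of the copula C_{θ,φ} is A_{θ,φ}(u,v) = C_{θ,φ}(u,v) + ∫₀^{min(u,v)} θ'(t)φ(t)² dt and its singular component is S_{θ,φ}(u,v) = −∫₀^{min(u,v)} θ'(t)φ(t)² dt.) -/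

import Mathlib

open Set intervalIntegral

private lemma cont_dW {f : ℝ → ℝ} (hf : ContDiffOn ℝ 1 f (Icc 0 1)) :
    ContinuousOn (derivWithin f (Icc 0 1)) (Icc 0 1) :=
  hf.continuousOn_derivWithin (uniqueDiffOn_Icc one_pos) le_rfl

private lemma intble {f : ℝ → ℝ} (hf : ContinuousOn f (Icc 0 1))
    {a b : ℝ} (ha : a ∈ Icc (0:ℝ) 1) (hb : b ∈ Icc (0:ℝ) 1) :
    IntervalIntegrable f MeasureTheory.volume a b :=
  (hf.mono (Set.uIcc_subset_Icc ha hb)).intervalIntegrable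

private lemma ftc {f : ℝ → ℝ} (hf : ContDiffOn ℝ 1 f (Icc 0 1))
    {a b : ℝ} (ha : a ∈ Icc (0:ℝ) 1) (hb : b ∈ Icc (0:ℝ) 1) (hab : a ≤ b) :
    ∫ x in a..b, derivWithin f (Icc 0 1) x = f b - f a := by
  have hsub : Icc a b ⊆ Icc (0:ℝ) 1 := Icc_subset_Icc ha.1 hb.2
  apply intervalIntegral.integral_eq_sub_of_hasDeriv_right_of_le hab
    (hf.continuousOn.mono hsub)
  · intro x hx
    have hx01 : x ∈ Ioo (0:ℝ) 1 := ⟨lt_of_le_of_lt ha.1 hx.1, lt_of_lt_of_le hx.2 hb.2⟩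
    have h1 := (hf.differentiableOn one_ne_zero x (Ioo_subset_Icc_self hx01)).hasDerivWithinAt
    exact (h1.hasDerivAt (Icc_mem_nhds hx01.1 hx01.2)).hasDerivWithinAt
  · exact (intble (cont_dW hf) ha hb)

private lemma inner_int (θ φ : ℝ → ℝ)
    (hθ : ContDiffOn ℝ 1 θ (Icc 0 1)) (hφ : ContDiffOn ℝ 1 φ (Icc 0 1)) (hφ0 : φ 0 = 0)
    {s v : ℝ} (hs : s ∈ Icc (0:ℝ) 1) (hv : v ∈ Icc (0:ℝ) 1) :
    (∫ t in (0:ℝ)..v, (1 + derivWithin (fun x => θ x * φ x) (Icc 0 1) (max s t) *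
        derivWithin φ (Icc 0 1) (min s t))) =
    v + derivWithin (fun x => θ x * φ x) (Icc 0 1) s * φ (min s v) +
      derivWithin φ (Icc 0 1) s * (θ v * φ v - θ (min s v) * φ (min s v)) := by
  have hg : ContDiffOn ℝ 1 (fun x => θ x * φ x) (Icc 0 1) := hθ.mul hφ
  have hG := cont_dW hg
  have hF := cont_dW hφ
  have h0 : (0:ℝ) ∈ Icc (0:ℝ) 1 := ⟨le_rfl, zero_le_one⟩
  rcases le_total v s with hvs | hsv
  · rw [min_eq_right hvs]
    have hEq : EqOn
        (fun t => 1 + derivWithin (fun x => θ x * φ x) (Icc 0 1) (max s t) *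
          derivWithin φ (Icc 0 1) (min s t))
        (fun t => 1 + derivWithin (fun x => θ x * φ x) (Icc 0 1) s *
          derivWithin φ (Icc 0 1) t) (uIcc 0 v) := by
      intro t ht
      rw [uIcc_of_le hv.1] at ht
      simp only [max_eq_left (ht.2.trans hvs), min_eq_right (ht.2.trans hvs)]
    rw [intervalIntegral.integral_congr hEq,
      intervalIntegral.integral_add intervalIntegrable_const
        ((intble hF h0 hv).const_mul _),
      intervalIntegral.integral_const, intervalIntegral.integral_const_mul,
      ftc hφ h0 hv hv.1, hφ0]
    simp only [smul_eq_mul]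
    ring
  · rw [min_eq_left hsv]
    have hmax : ContinuousOn (fun t : ℝ => max s t) (Icc 0 1) :=
      (continuous_const.max continuous_id).continuousOn
    have hmin : ContinuousOn (fun t : ℝ => min s t) (Icc 0 1) :=
      (continuous_const.min continuous_id).continuousOn
    have hGmax := hG.comp hmax (fun t ht => ⟨le_max_of_le_right ht.1, max_le hs.2 ht.2⟩)
    have hFmin := hF.comp hmin (fun t ht => ⟨le_min hs.1 ht.1, min_le_of_right_le ht.2⟩)
    have hcont : ContinuousOn
        (fun t => 1 + derivWithin (fun x => θ x * φ x) (Icc 0 1) (max s t) *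
          derivWithin φ (Icc 0 1) (min s t)) (Icc 0 1) :=
      continuousOn_const.add (hGmax.mul hFmin)
    rw [← intervalIntegral.integral_add_adjacent_intervals
      (intble hcont h0 hs) (intble hcont hs hv)]
    have hEq1 : EqOn
        (fun t => 1 + derivWithin (fun x => θ x * φ x) (Icc 0 1) (max s t) *
          derivWithin φ (Icc 0 1) (min s t))
        (fun t => 1 + derivWithin (fun x => θ x * φ x) (Icc 0 1) s *
          derivWithin φ (Icc 0 1) t) (uIcc 0 s) := by
      intro t ht
      rw [uIcc_of_le hs.1] at ht
      simp only [max_eq_left ht.2, min_eq_right ht.2]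
    have hEq2 : EqOn
        (fun t => 1 + derivWithin (fun x => θ x * φ x) (Icc 0 1) (max s t) *
          derivWithin φ (Icc 0 1) (min s t))
        (fun t => 1 + derivWithin (fun x => θ x * φ x) (Icc 0 1) t *
          derivWithin φ (Icc 0 1) s) (uIcc s v) := by
      intro t ht
      rw [uIcc_of_le hsv] at ht
      simp only [max_eq_right ht.1, min_eq_left ht.1]
    rw [intervalIntegral.integral_congr hEq1, intervalIntegral.integral_congr hEq2,
      intervalIntegral.integral_add intervalIntegrable_const
        ((intble hF h0 hs).const_mul _),
      intervalIntegral.integral_add intervalIntegrable_const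
        ((intble hG hs hv).mul_const _),
      intervalIntegral.integral_const, intervalIntegral.integral_const,
      intervalIntegral.integral_const_mul, intervalIntegral.integral_mul_const,
      ftc hφ h0 hs hs.1, ftc hg hs hv hsv, hφ0]
    simp only [smul_eq_mul]
    ring

theorem stmt2 (θ φ : ℝ → ℝ)
    (hθ : ContDiffOn ℝ 1 θ (Set.Icc 0 1))
    (hφ : ContDiffOn ℝ 1 φ (Set.Icc 0 1))
    (hφ0 : φ 0 = 0) :
    ∀ u ∈ Set.Icc (0:ℝ) 1, ∀ v ∈ Set.Icc (0:ℝ) 1,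
      (∫ s in (0:ℝ)..u, ∫ t in (0:ℝ)..v,
        (1 + derivWithin (fun x => θ x * φ x) (Set.Icc 0 1) (max s t) *
          derivWithin φ (Set.Icc 0 1) (min s t))) =
      (u * v + θ (max u v) * φ u * φ v) +
        ∫ t in (0:ℝ)..(min u v), derivWithin θ (Set.Icc 0 1) t * (φ t) ^ 2 := by
  intro u hu v hv
  have hg : ContDiffOn ℝ 1 (fun x => θ x * φ x) (Icc 0 1) := hθ.mul hφ
  have hG := cont_dW hg
  have hF := cont_dW hφ
  have hT := cont_dW hθ
  have h0 : (0:ℝ) ∈ Icc (0:ℝ) 1 := ⟨le_rfl, zero_le_one⟩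
  -- rewrite inner integral
  have hcongO : EqOn
      (fun s => ∫ t in (0:ℝ)..v,
        (1 + derivWithin (fun x => θ x * φ x) (Set.Icc 0 1) (max s t) *
          derivWithin φ (Set.Icc 0 1) (min s t)))
      (fun s => v + derivWithin (fun x => θ x * φ x) (Icc 0 1) s * φ (min s v) +
        derivWithin φ (Icc 0 1) s * (θ v * φ v - θ (min s v) * φ (min s v)))
      (uIcc 0 u) := by
    intro s hsu
    rw [uIcc_of_le hu.1] at hsu
    exact inner_int θ φ hθ hφ hφ0 ⟨hsu.1, hsu.2.trans hu.2⟩ hv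
  rw [intervalIntegral.integral_congr hcongO]
  -- continuity of the new integrand
  have hminc : ContinuousOn (fun s : ℝ => min s v) (Icc 0 1) :=
    (continuous_id.min continuous_const).continuousOn
  have hmaps : MapsTo (fun s : ℝ => min s v) (Icc 0 1) (Icc 0 1) :=
    fun s hsx => ⟨le_min hsx.1 hv.1, min_le_of_left_le hsx.2⟩
  have hφmin := hφ.continuousOn.comp hminc hmaps
  have hθmin := hθ.continuousOn.comp hminc hmaps
  have hEcont : ContinuousOn
      (fun s => v + derivWithin (fun x => θ x * φ x) (Icc 0 1) s * φ (min s v) +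
        derivWithin φ (Icc 0 1) s * (θ v * φ v - θ (min s v) * φ (min s v))) (Icc 0 1) :=
    (continuousOn_const.add (hG.mul hφmin)).add
      (hF.mul (continuousOn_const.sub (hθmin.mul hφmin)))
  -- the "diagonal" expression valid for s ≤ v
  have hA : ContinuousOn (fun s => derivWithin θ (Icc 0 1) s * φ s ^ 2) (Icc 0 1) :=
    hT.mul (hφ.continuousOn.pow 2)
  have hdiag : ∀ s ∈ Icc (0:ℝ) 1, s ≤ v →
      v + derivWithin (fun x => θ x * φ x) (Icc 0 1) s * φ (min s v) +
        derivWithin φ (Icc 0 1) s * (θ v * φ v - θ (min s v) * φ (min s v)) =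
      v + derivWithin θ (Icc 0 1) s * φ s ^ 2 +
        (θ v * φ v) * derivWithin φ (Icc 0 1) s := by
    intro s hsx hsv
    rw [min_eq_left hsv,
      derivWithin_fun_mul
        (hθ.differentiableOn one_ne_zero s hsx) (hφ.differentiableOn one_ne_zero s hsx)]
    ring
  rcases le_total u v with huv | hvu
  · rw [min_eq_left huv, max_eq_right huv]
    have hEq : EqOn
        (fun s => v + derivWithin (fun x => θ x * φ x) (Icc 0 1) s * φ (min s v) +
          derivWithin φ (Icc 0 1) s * (θ v * φ v - θ (min s v) * φ (min s v)))
        (fun s => v + derivWithin θ (Icc 0 1) s * φ s ^ 2 +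
          (θ v * φ v) * derivWithin φ (Icc 0 1) s) (uIcc 0 u) := by
      intro s hsu
      rw [uIcc_of_le hu.1] at hsu
      exact hdiag s ⟨hsu.1, hsu.2.trans hu.2⟩ (hsu.2.trans huv)
    rw [intervalIntegral.integral_congr hEq,
      intervalIntegral.integral_add
        (intervalIntegrable_const.add (intble hA h0 hu))
        ((intble hF h0 hu).const_mul _),
      intervalIntegral.integral_add intervalIntegrable_const (intble hA h0 hu),
      intervalIntegral.integral_const, intervalIntegral.integral_const_mul,
      ftc hφ h0 hu hu.1, hφ0]
    simp only [smul_eq_mul]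
    ring
  · rw [min_eq_right hvu, max_eq_left hvu]
    rw [← intervalIntegral.integral_add_adjacent_intervals
      (intble hEcont h0 hv) (intble hEcont hv hu)]
    have hEq1 : EqOn
        (fun s => v + derivWithin (fun x => θ x * φ x) (Icc 0 1) s * φ (min s v) +
          derivWithin φ (Icc 0 1) s * (θ v * φ v - θ (min s v) * φ (min s v)))
        (fun s => v + derivWithin θ (Icc 0 1) s * φ s ^ 2 +
          (θ v * φ v) * derivWithin φ (Icc 0 1) s) (uIcc 0 v) := by
      intro s hsu
      rw [uIcc_of_le hv.1] at hsu
      exact hdiag s ⟨hsu.1, hsu.2.trans hv.2⟩ hsu.2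
    have hEq2 : EqOn
        (fun s => v + derivWithin (fun x => θ x * φ x) (Icc 0 1) s * φ (min s v) +
          derivWithin φ (Icc 0 1) s * (θ v * φ v - θ (min s v) * φ (min s v)))
        (fun s => v + derivWithin (fun x => θ x * φ x) (Icc 0 1) s * φ v) (uIcc v u) := by
      intro s hsu
      rw [uIcc_of_le hvu] at hsu
      simp only [min_eq_right hsu.1, sub_self, mul_zero, add_zero]
    rw [intervalIntegral.integral_congr hEq1, intervalIntegral.integral_congr hEq2,
      intervalIntegral.integral_add
        (intervalIntegrable_const.add (intble hA h0 hv))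
        ((intble hF h0 hv).const_mul _),
      intervalIntegral.integral_add intervalIntegrable_const (intble hA h0 hv),
      intervalIntegral.integral_add intervalIntegrable_const
        ((intble hG hv hu).mul_const _),
      intervalIntegral.integral_const, intervalIntegral.integral_const,
      intervalIntegral.integral_const_mul, intervalIntegral.integral_mul_const,
      ftc hφ h0 hv hv.1, ftc hg hv hu hvu, hφ0]
    simp only [smul_eq_mul]
    ring
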